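/- Let C ≥ 1, A ≥ 1, and let (M_k)_{k∈ℕ₀} be a sequence of nonnegative real numbers satisfying M_{k+1} ≤ C A^k k! + C k Σ_{l=0}^{k} C(k,l) M_{k−l} A^l l! for all k ∈ ℕ₀, where C(k,l) is the binomial coefficient. Then there exist constants C_u < ∞ and A_u < ∞ such that M_k ≤ C_u A_u^k k! for all k ∈ ℕ₀. -/
import Mathlib


/-- Cauchy's method of majorants, conclusion step. If `C ≥ 1`, `A ≥ 1`
and a sequence of nonnegative reals `(M_k)` satisfies
`M_{k+1} ≤ C A^k k! + C k Σ_{l=0}^{k} (k choose l) M_{k−l} A^l l!` for all `k ∈ ℕ₀`,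
then there exist constants `C_u, A_u < ∞` with `M_k ≤ C_u A_u^k k!` for all `k`. -/
theorem majorant_conclusion (C A : ℝ) (hC : 1 ≤ C) (hA : 1 ≤ A) (M : ℕ → ℝ)
    (hM : ∀ k, 0 ≤ M k)
    (hrec : ∀ k : ℕ, M (k + 1) ≤
      C * A ^ k * (Nat.factorial k : ℝ) +
        C * (k : ℝ) * ∑ l ∈ Finset.range (k + 1),
          (Nat.choose k l : ℝ) * M (k - l) * A ^ l * (Nat.factorial l : ℝ)) :
    ∃ Cu Au : ℝ, ∀ k : ℕ, M k ≤ Cu * Au ^ k * (Nat.factorial k : ℝ) := by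
  set Au := A + C with hAuDef
  have hAuA : A ≤ Au := by linarith
  have hAu1 : 1 ≤ Au := le_trans hA hAuA
  have hAu0 : (0:ℝ) ≤ Au := by linarith
  set Cu := max (M 0) 1 with hCuDef
  have hCu1 : 1 ≤ Cu := le_max_right _ _
  have hCu0 : (0:ℝ) ≤ Cu := by linarith
  refine ⟨Cu, Au, ?_⟩
  -- geometric sum identity
  have hgeom : ∀ k : ℕ, C * ∑ l ∈ Finset.range (k+1), Au^(k-l) * A^l
      = Au^(k+1) - A^(k+1) := by
    intro k
    induction k with
    | zero => simp [hAuDef]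
    | succ n ih =>
      rw [Finset.sum_range_succ]
      have h1 : ∀ l ∈ Finset.range (n+1), Au^(n+1-l) * A^l = Au * (Au^(n-l) * A^l) := by
        intro l hl
        rw [Finset.mem_range] at hl
        rw [show n+1-l = (n-l)+1 from by omega, pow_succ]
        ring
      rw [Finset.sum_congr rfl h1, ← Finset.mul_sum,
        show n+1-(n+1) = 0 from by omega]
      have : C * (Au * ∑ l ∈ Finset.range (n+1), Au^(n-l) * A^l)
          = Au * (C * ∑ l ∈ Finset.range (n+1), Au^(n-l) * A^l) := by ring
      rw [mul_add, this, ih]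
      have hAC : Au - C = A := by rw [hAuDef]; ring
      calc Au * (Au^(n+1) - A^(n+1)) + C * (Au^0 * A^(n+1))
          = Au^(n+2) - (Au - C) * A^(n+1) := by ring
        _ = Au^(n+2) - A^(n+2) := by rw [hAC]; ring
  -- main strong induction
  have main : ∀ k : ℕ, ∀ j ≤ k, M j ≤ Cu * Au ^ j * (Nat.factorial j : ℝ) := by
    intro k
    induction k with
    | zero =>
      intro j hj
      interval_cases j
      simp only [pow_zero, Nat.factorial_zero, Nat.cast_one, mul_one]
      exact le_max_left (M 0) 1
    | succ n ih =>
      intro j hj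
      rcases Nat.lt_succ_iff_lt_or_eq.mp (Nat.lt_succ_of_le hj) with h | h
      · exact ih j (Nat.lt_succ_iff.mp h)
      · subst h
        have hsum : ∑ l ∈ Finset.range (n+1),
            (Nat.choose n l : ℝ) * M (n - l) * A ^ l * (Nat.factorial l : ℝ)
            ≤ Cu * (Nat.factorial n : ℝ) * ∑ l ∈ Finset.range (n+1), Au^(n-l) * A^l := by
          rw [Finset.mul_sum]
          apply Finset.sum_le_sum
          intro l hl
          rw [Finset.mem_range] at hl
          have hln : l ≤ n := Nat.lt_succ_iff.mp hl
          have hMl : M (n - l) ≤ Cu * Au ^ (n-l) * (Nat.factorial (n-l) : ℝ) :=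
            ih (n - l) (Nat.sub_le n l)
          have hfact : (Nat.choose n l : ℝ) * (Nat.factorial l : ℝ) * (Nat.factorial (n-l) : ℝ)
              = (Nat.factorial n : ℝ) := by
            rw [← Nat.cast_mul, ← Nat.cast_mul, Nat.choose_mul_factorial_mul_factorial hln]
          have hnn : (0:ℝ) ≤ (Nat.choose n l : ℝ) * A ^ l * (Nat.factorial l : ℝ) := by
            positivity
          calc (Nat.choose n l : ℝ) * M (n - l) * A ^ l * (Nat.factorial l : ℝ)
              ≤ (Nat.choose n l : ℝ) * (Cu * Au ^ (n-l) * (Nat.factorial (n-l) : ℝ))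
                * A ^ l * (Nat.factorial l : ℝ) := by
                have h0 := mul_le_mul_of_nonneg_left hMl (by positivity :
                  (0:ℝ) ≤ (Nat.choose n l : ℝ))
                exact mul_le_mul_of_nonneg_right
                  (mul_le_mul_of_nonneg_right h0 (by positivity)) (by positivity)
            _ = Cu * ((Nat.choose n l : ℝ) * (Nat.factorial l : ℝ) * (Nat.factorial (n-l) : ℝ))
                * (Au ^ (n-l) * A ^ l) := by ring
            _ = Cu * (Nat.factorial n : ℝ) * (Au ^ (n-l) * A ^ l) := by rw [hfact]
        have hrecn := hrec n
        set S := ∑ l ∈ Finset.range (n+1), Au^(n-l) * A^l with hS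
        have hgn := hgeom n
        have hCn0 : (0:ℝ) ≤ C * (n:ℝ) := by positivity
        have step1 : M (n+1) ≤ C * A ^ n * (Nat.factorial n : ℝ)
            + C * (n:ℝ) * (Cu * (Nat.factorial n : ℝ) * S) := by
          refine le_trans hrecn ?_
          have := mul_le_mul_of_nonneg_left hsum hCn0
          linarith
        have step2 : C * (n:ℝ) * (Cu * (Nat.factorial n : ℝ) * S)
            = (n:ℝ) * Cu * (Nat.factorial n : ℝ) * (C * S) := by ring
        rw [step2, hgn] at step1
        have hApow : (0:ℝ) ≤ A ^ (n+1) := by positivity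
        have hfac0 : (0:ℝ) ≤ (Nat.factorial n : ℝ) := Nat.cast_nonneg _
        have hterm1 : C * A ^ n * (Nat.factorial n : ℝ)
            ≤ Cu * Au ^ (n+1) * (Nat.factorial n : ℝ) := by
          have hpow : A ^ n ≤ Au ^ n := pow_le_pow_left₀ (by linarith) hAuA n
          have hCAu : C ≤ Au := by linarith
          have h1 : C * A ^ n ≤ Au * Au ^ n := by
            have hApn : (0:ℝ) ≤ A ^ n := by positivity
            nlinarith
          have h2 : Au * Au ^ n ≤ Cu * Au ^ (n+1) := by
            rw [pow_succ]
            calc Au * Au ^ n = 1 * (Au ^ n * Au) := by ring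
              _ ≤ Cu * (Au ^ n * Au) := mul_le_mul_of_nonneg_right hCu1 (by positivity)
          exact mul_le_mul_of_nonneg_right (le_trans h1 h2) hfac0
        have hterm2 : (n:ℝ) * Cu * (Nat.factorial n : ℝ) * (Au^(n+1) - A^(n+1))
            ≤ (n:ℝ) * Cu * (Nat.factorial n : ℝ) * Au^(n+1) := by
          have : (0:ℝ) ≤ (n:ℝ) * Cu * (Nat.factorial n : ℝ) := by positivity
          nlinarith
        have hfin : M (n+1) ≤ Cu * Au ^ (n+1) * (Nat.factorial n : ℝ)
            + (n:ℝ) * Cu * (Nat.factorial n : ℝ) * Au^(n+1) := by linarith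
        calc M (n+1) ≤ Cu * Au ^ (n+1) * (Nat.factorial n : ℝ)
              + (n:ℝ) * Cu * (Nat.factorial n : ℝ) * Au^(n+1) := hfin
          _ = Cu * Au ^ (n+1) * ((n:ℝ)+1) * (Nat.factorial n : ℝ) := by ring
          _ = Cu * Au ^ (n+1) * (Nat.factorial (n+1) : ℝ) := by
              rw [Nat.factorial_succ, Nat.cast_mul]
              push_cast
              ring
  exact fun k => main k k le_rfl
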